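/- With $P = \frac{2^B}{\pi}\sin(\pi/2^B)$, $A_1 = \frac{20}{\delta \ln 10}(10^{\delta/40} - 10^{-\delta/40})$, and $A_2 = \frac{10}{\delta \ln 10}(10^{\delta/20} - 10^{-\delta/20})$, the quantity $1 - 2 P A_1 + A_2$ is nonnegative for all $B \geq 1$ and $\delta > 0$, and tends to $0$ as $B \to \infty$ and $\delta \to 0^+$. -/

import Mathlib

open Real Filter

noncomputable def Pq (B : ℕ) : ℝ := 2 ^ B / π * Real.sin (π / 2 ^ B)

noncomputable def A1 (δ : ℝ) : ℝ :=
  20 / (δ * Real.log 10) * ((10 : ℝ) ^ (δ/40) - (10 : ℝ) ^ (-(δ/40)))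

noncomputable def A2 (δ : ℝ) : ℝ :=
  10 / (δ * Real.log 10) * ((10 : ℝ) ^ (δ/20) - (10 : ℝ) ^ (-(δ/20)))

lemma A1_eq (δ : ℝ) (hδ : δ ≠ 0) :
    A1 δ = Real.sinh (δ * Real.log 10 / 40) / (δ * Real.log 10 / 40) := by
  have hL : Real.log 10 ≠ 0 := ne_of_gt (Real.log_pos (by norm_num))
  rw [A1, Real.rpow_def_of_pos (by norm_num : (0:ℝ) < 10),
    Real.rpow_def_of_pos (by norm_num : (0:ℝ) < 10), Real.sinh_eq]
  have h1 : Real.log 10 * (δ/40) = δ * Real.log 10 / 40 := by ring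
  have h2 : Real.log 10 * (-(δ/40)) = -(δ * Real.log 10 / 40) := by ring
  rw [h1, h2]
  field_simp
  ring

lemma A2_eq (δ : ℝ) (hδ : δ ≠ 0) :
    A2 δ = Real.sinh (δ * Real.log 10 / 20) / (δ * Real.log 10 / 20) := by
  have hL : Real.log 10 ≠ 0 := ne_of_gt (Real.log_pos (by norm_num))
  rw [A2, Real.rpow_def_of_pos (by norm_num : (0:ℝ) < 10),
    Real.rpow_def_of_pos (by norm_num : (0:ℝ) < 10), Real.sinh_eq]
  have h1 : Real.log 10 * (δ/20) = δ * Real.log 10 / 20 := by ring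
  have h2 : Real.log 10 * (-(δ/20)) = -(δ * Real.log 10 / 20) := by ring
  rw [h1, h2]
  field_simp
  ring

lemma g_mono : Monotone (fun t : ℝ => t - 2 * Real.sinh t + Real.sinh (2*t) / 2) := by
  have hderiv : ∀ x : ℝ, HasDerivAt (fun t : ℝ => t - 2 * Real.sinh t + Real.sinh (2*t) / 2)
      (1 - 2 * Real.cosh x + Real.cosh (2*x) * 2 / 2) x := by
    intro x
    have h1 : HasDerivAt (fun t : ℝ => Real.sinh (2*t)) (Real.cosh (2*x) * 2) x := by
      have := (Real.hasDerivAt_sinh (2*x)).comp x ((hasDerivAt_id x).const_mul 2)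
      simpa [Function.comp_def] using this
    exact ((hasDerivAt_id x).sub ((Real.hasDerivAt_sinh x).const_mul 2)).add (h1.div_const 2)
  apply monotone_of_deriv_nonneg
  · exact fun x => (hderiv x).differentiableAt
  · intro x
    rw [(hderiv x).deriv]
    have hc : 1 ≤ Real.cosh x := Real.one_le_cosh x
    have h2 : Real.cosh (2*x) = Real.cosh x ^ 2 + Real.sinh x ^ 2 := Real.cosh_two_mul x
    have h3 : Real.cosh x ^ 2 = Real.sinh x ^ 2 + 1 := (Real.cosh_sq' x).trans (by ring)
    nlinarith

lemma g_nonneg {t : ℝ} (ht : 0 ≤ t) : 0 ≤ t - 2 * Real.sinh t + Real.sinh (2*t) / 2 := by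
  have := g_mono ht
  simpa using this

lemma Pq_le_one (B : ℕ) : Pq B ≤ 1 := by
  have hx : (0:ℝ) < π / 2 ^ B := by positivity
  have hs : Real.sin (π / 2 ^ B) ≤ π / 2 ^ B := Real.sin_le hx.le
  have h2 : (0:ℝ) < 2 ^ B / π := by positivity
  calc Pq B ≤ 2 ^ B / π * (π / 2 ^ B) := by
        exact mul_le_mul_of_nonneg_left hs h2.le
    _ = 1 := by field_simp
    
lemma Pq_nonneg (B : ℕ) (hB : 1 ≤ B) : 0 ≤ Pq B := by
  have hx : (0:ℝ) < π / 2 ^ B := by positivity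
  have hle : π / 2 ^ B ≤ π := by
    apply div_le_self Real.pi_pos.le
    exact one_le_pow₀ (by norm_num)
  have := Real.sin_nonneg_of_nonneg_of_le_pi hx.le hle
  have h2 : (0:ℝ) ≤ 2 ^ B / π := by positivity
  exact mul_nonneg h2 this

lemma tendsto_sinh_div : Tendsto (fun u : ℝ => Real.sinh u / u) (nhdsWithin 0 {(0:ℝ)}ᶜ) (nhds 1) := by
  have h := hasDerivAt_iff_tendsto_slope.mp (Real.hasDerivAt_sinh 0)
  simp only [Real.cosh_zero] at h
  refine h.congr ?_
  intro x
  simp [slope_def_field, Real.sinh_zero]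

lemma tendsto_sin_div : Tendsto (fun u : ℝ => Real.sin u / u) (nhdsWithin 0 {(0:ℝ)}ᶜ) (nhds 1) := by
  have h := hasDerivAt_iff_tendsto_slope.mp (Real.hasDerivAt_sin 0)
  simp only [Real.cos_zero] at h
  refine h.congr ?_
  intro x
  simp [slope_def_field, Real.sin_zero]

lemma tendsto_Pq : Tendsto Pq atTop (nhds 1) := by
  have hx0 : Tendsto (fun B : ℕ => π / 2 ^ B) atTop (nhds 0) := by
    have : Tendsto (fun B : ℕ => ((2:ℝ)⁻¹) ^ B) atTop (nhds 0) :=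
      tendsto_pow_atTop_nhds_zero_of_lt_one (by norm_num) (by norm_num)
    have := this.const_mul π
    simpa [div_eq_mul_inv, inv_pow] using this
  have hx : Tendsto (fun B : ℕ => π / 2 ^ B) atTop (nhdsWithin 0 {(0:ℝ)}ᶜ) := by
    rw [tendsto_nhdsWithin_iff]
    refine ⟨hx0, Eventually.of_forall fun B => ?_⟩
    have : (0:ℝ) < π / 2 ^ B := by positivity
    simpa using this.ne'
  have := tendsto_sin_div.comp hx
  refine this.congr fun B => ?_
  have hπ : (π:ℝ) ≠ 0 := Real.pi_ne_zero
  have h2 : ((2:ℝ) ^ B) ≠ 0 := by positivity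
  simp only [Function.comp, Pq]
  field_simp

lemma tendsto_A1 : Tendsto A1 (nhdsWithin 0 (Set.Ioi 0)) (nhds 1) := by
  have hL : (0:ℝ) < Real.log 10 := Real.log_pos (by norm_num)
  have hmap : Tendsto (fun δ : ℝ => δ * Real.log 10 / 40) (nhdsWithin 0 (Set.Ioi 0))
      (nhdsWithin 0 {(0:ℝ)}ᶜ) := by
    rw [tendsto_nhdsWithin_iff]
    constructor
    · have : Tendsto (fun δ : ℝ => δ * Real.log 10 / 40) (nhds 0) (nhds 0) := by
        have : Continuous (fun δ : ℝ => δ * Real.log 10 / 40) := by continuity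
        simpa using this.tendsto 0
      exact this.mono_left nhdsWithin_le_nhds
    · filter_upwards [self_mem_nhdsWithin] with δ hδ
      have : (0:ℝ) < δ * Real.log 10 / 40 := by
        have : (0:ℝ) < δ := hδ
        positivity
      simpa using this.ne'
  have := tendsto_sinh_div.comp hmap
  refine this.congr' ?_
  filter_upwards [self_mem_nhdsWithin] with δ hδ
  exact (A1_eq δ (ne_of_gt hδ)).symm

lemma tendsto_A2 : Tendsto A2 (nhdsWithin 0 (Set.Ioi 0)) (nhds 1) := by
  have hL : (0:ℝ) < Real.log 10 := Real.log_pos (by norm_num)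
  have hmap : Tendsto (fun δ : ℝ => δ * Real.log 10 / 20) (nhdsWithin 0 (Set.Ioi 0))
      (nhdsWithin 0 {(0:ℝ)}ᶜ) := by
    rw [tendsto_nhdsWithin_iff]
    constructor
    · have : Tendsto (fun δ : ℝ => δ * Real.log 10 / 20) (nhds 0) (nhds 0) := by
        have : Continuous (fun δ : ℝ => δ * Real.log 10 / 20) := by continuity
        simpa using this.tendsto 0
      exact this.mono_left nhdsWithin_le_nhds
    · filter_upwards [self_mem_nhdsWithin] with δ hδ
      have : (0:ℝ) < δ * Real.log 10 / 20 := by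
        have : (0:ℝ) < δ := hδ
        positivity
      simpa using this.ne'
  have := tendsto_sinh_div.comp hmap
  refine this.congr' ?_
  filter_upwards [self_mem_nhdsWithin] with δ hδ
  exact (A2_eq δ (ne_of_gt hδ)).symm

/-- The degradation factor `1 - 2 P A₁ + A₂` is nonnegative for all `B ≥ 1`, `δ > 0`, and
tends to `0` as `B → ∞` and `δ → 0⁺`. -/
theorem degradation_factor_nonneg_and_tendsto_zero :
    (∀ B : ℕ, 1 ≤ B → ∀ δ : ℝ, 0 < δ → 0 ≤ 1 - 2 * Pq B * A1 δ + A2 δ) ∧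
    Tendsto (fun p : ℕ × ℝ => 1 - 2 * Pq p.1 * A1 p.2 + A2 p.2)
      (atTop ×ˢ nhdsWithin 0 (Set.Ioi 0)) (nhds 0) := by
  constructor
  · intro B hB δ hδ
    have hL : (0:ℝ) < Real.log 10 := Real.log_pos (by norm_num)
    set t := δ * Real.log 10 / 40 with ht_def
    have ht : 0 < t := by positivity
    have hA1 : A1 δ = Real.sinh t / t := A1_eq δ hδ.ne'
    have hA2 : A2 δ = Real.sinh (2*t) / (2*t) := by
      rw [A2_eq δ hδ.ne', ht_def]
      congr 1 <;> ring
    have hA1nn : 0 ≤ A1 δ := by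
      rw [hA1]
      exact div_nonneg (Real.sinh_nonneg_iff.mpr ht.le) ht.le
    have key : 0 ≤ 1 - 2 * A1 δ + A2 δ := by
      rw [hA1, hA2]
      have hg := g_nonneg ht.le
      have heq : 1 - 2 * (Real.sinh t / t) + Real.sinh (2*t) / (2*t)
          = (t - 2 * Real.sinh t + Real.sinh (2*t) / 2) / t := by
        field_simp
      rw [heq]
      exact div_nonneg hg ht.le
    have hP := Pq_le_one B
    nlinarith
  · have h1 : Tendsto (fun p : ℕ × ℝ => Pq p.1) (atTop ×ˢ nhdsWithin 0 (Set.Ioi 0)) (nhds 1) :=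
      tendsto_Pq.comp tendsto_fst
    have h2 : Tendsto (fun p : ℕ × ℝ => A1 p.2) (atTop ×ˢ nhdsWithin 0 (Set.Ioi 0)) (nhds 1) :=
      tendsto_A1.comp tendsto_snd
    have h3 : Tendsto (fun p : ℕ × ℝ => A2 p.2) (atTop ×ˢ nhdsWithin 0 (Set.Ioi 0)) (nhds 1) :=
      tendsto_A2.comp tendsto_snd
    have := ((tendsto_const_nhds.sub ((tendsto_const_nhds.mul h1).mul h2)).add h3 :
      Tendsto (fun p : ℕ × ℝ => (1:ℝ) - 2 * Pq p.1 * A1 p.2 + A2 p.2)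
        (atTop ×ˢ nhdsWithin 0 (Set.Ioi 0)) (nhds ((1:ℝ) - 2*1*1 + 1)))
    norm_num at this
    exact this
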